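/- For every integer a ≥ 2, the cross shape C_a = {(x,0) : −a ≤ x ≤ a} ∪ {(0,y) : −a ≤ y ≤ a} is a y-monotone shape that is not foldable with zero error: no Turning Machine (any length n, initial positions pos(m_i)=(i,0), any initial integer states) computes a target configuration with all states 0 whose set of monomer positions is a translate of C_a. -/

import Mathlib

namespace TuringMachineFolding

/-- Points of the triangular grid, coordinatised by `ℤ × ℤ`. -/
abbrev Pt : Type := ℤ × ℤ

/-- The six triangular-grid unit vectors `x, y, w, -x, -y, -w`. -/
def unitVecs : Set Pt :=
  {((1 : ℤ), (0 : ℤ)), (0, 1), (-1, 1), (-1, 0), (0, -1), (1, -1)}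

/-- Anticlockwise rotation by `π/3`: the linear map with `ρ(1,0) = (0,1)`, `ρ(0,1) = (-1,1)`. -/
def rot : Pt → Pt := fun p => (-p.2, p.1 + p.2)

/-- Clockwise rotation by `π/3`, the inverse of `rot`. -/
def rotInv : Pt → Pt := fun p => (p.1 + p.2, -p.1)

/-- `rot` as a permutation of the grid, so that integer powers `rotE ^ t` make sense. -/
def rotE : Equiv.Perm Pt where
  toFun := rot
  invFun := rotInv
  left_inv := by
    rintro ⟨a, b⟩
    simp only [rot, rotInv, Prod.mk.injEq]
    constructor <;> ring
  right_inv := by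
    rintro ⟨a, b⟩
    simp only [rot, rotInv, Prod.mk.injEq]
    constructor <;> ring

/-- Scalar multiple of a grid vector. -/
def zsmulPt (m : ℤ) (p : Pt) : Pt := (m * p.1, m * p.2)

/-- A configuration of a Turning Machine of length `n`: states and positions of the monomers
`m_0, …, m_{n-1}` (indices `≥ n` carry irrelevant junk values), such that `pos m_0 = (0,0)`,
consecutive positions differ by one of the six unit vectors, and positions are pairwise
distinct. -/
structure Config (n : ℕ) where
  st : ℕ → ℤ
  pos : ℕ → Pt
  pos_zero : pos 0 = (0, 0)
  step_unit : ∀ i, i + 1 < n → pos (i + 1) - pos i ∈ unitVecs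
  pos_inj : ∀ i < n, ∀ j < n, pos i = pos j → i = j

/-- The direction of monomer `m_i` (meaningful for `i + 1 < n`). -/
def dir {n : ℕ} (c : Config n) (i : ℕ) : Pt := c.pos (i + 1) - c.pos i

/-- The translation vector applied to the head of `m_i` when the turning rule fires at `m_i`:
`ρ²(d_i)` for a positive state, `ρ⁻²(d_i)` for a negative state. -/
def delta {n : ℕ} (c : Config n) (i : ℕ) : Pt :=
  if 0 < c.st i then rot (rot (dir c i)) else rotInv (rotInv (dir c i))

/-- The state sequence after applying the turning rule at monomer `i`. -/
def nextSt {n : ℕ} (c : Config n) (i : ℕ) : ℕ → ℤ := fun j =>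
  if j = i then (if 0 < c.st i then c.st i - 1 else c.st i + 1) else c.st j

/-- The position sequence after applying the turning rule at monomer `i`. -/
def nextPos {n : ℕ} (c : Config n) (i : ℕ) : ℕ → Pt := fun j =>
  if i < j then c.pos j + delta c i else c.pos j

/-- The turning rule applied at monomer `i` transforms `c` into `c'`.  The requirement that
`c'` is again a `Config` (pairwise distinct positions) encodes that the move is not blocked. -/
def StepAt {n : ℕ} (c : Config n) (i : ℕ) (c' : Config n) : Prop :=
  i < n ∧ c.st i ≠ 0 ∧ (∀ j < n, c'.st j = nextSt c i j) ∧ (∀ j < n, c'.pos j = nextPos c i j)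

/-- The turning rule is applicable to monomer `i` in configuration `c`. -/
def Applicable {n : ℕ} (c : Config n) (i : ℕ) : Prop := ∃ c', StepAt c i c'

/-- Monomer `i` is blocked in `c`: nonzero state, but no applicable rule. -/
def Blocked {n : ℕ} (c : Config n) (i : ℕ) : Prop :=
  i < n ∧ c.st i ≠ 0 ∧ ¬ Applicable c i

/-- One asynchronous step of the machine. -/
def Step {n : ℕ} (c c' : Config n) : Prop := ∃ i, StepAt c i c'

/-- `c` is reachable from `c₀` by a finite sequence of rule applications. -/
def Reachable {n : ℕ} (c₀ c : Config n) : Prop := Relation.ReflTransGen Step c₀ c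

/-- No rule is applicable in `c`. -/
def Terminal {n : ℕ} (c : Config n) : Prop := ∀ i, ¬ Applicable c i

/-- `c` is permanently blocked: some state is nonzero but no monomer admits an applicable rule. -/
def PermBlocked {n : ℕ} (c : Config n) : Prop :=
  (∃ i < n, c.st i ≠ 0) ∧ Terminal c

/-- The Turning Machine with initial configuration `c₀` computes the target configuration `ct`:
every maximal sequence of rule applications from `c₀` is finite and ends in `ct`
(configurations are compared on the meaningful indices `< n`). -/
def Computes {n : ℕ} (c₀ ct : Config n) : Prop :=
  (¬ ∃ f : ℕ → Config n, f 0 = c₀ ∧ ∀ k, Step (f k) (f (k + 1))) ∧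
  ∀ c, Reachable c₀ c → Terminal c → ∀ i < n, c.st i = ct.st i ∧ c.pos i = ct.pos i

/-- The initial configuration with monomers on the x-axis, `pos m_i = (i,0)`, and
initial states `s₀`. -/
def mkInit (n : ℕ) (s₀ : ℕ → ℤ) : Config n where
  st := s₀
  pos := fun i => ((i : ℤ), 0)
  pos_zero := by simp
  step_unit := by
    intro i _
    have h : (((i + 1 : ℕ) : ℤ), (0 : ℤ)) - (((i : ℕ) : ℤ), (0 : ℤ)) = ((1 : ℤ), (0 : ℤ)) := by
      simp only [Prod.mk_sub_mk, Prod.mk.injEq]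
      constructor <;> push_cast <;> ring
    rw [h]
    simp [unitVecs]
  pos_inj := by
    intro i _ j _ h
    have h1 : ((i : ℕ) : ℤ) = ((j : ℕ) : ℤ) := congrArg Prod.fst h
    exact_mod_cast h1

/-- The initial configuration of the line-rotating Turning Machine `L^σ_n`:
`pos m_i = (i,0)`, states `σ` except the last monomer which has state `0`. -/
def lineInit (n : ℕ) (σ : ℤ) : Config n :=
  mkInit n (fun i => if i + 1 = n then 0 else σ)

/-- `Δs`: the number of rule applications made to monomer `i` on the way from `c₀` to `c`
(each application changes the state by one, towards `0`). -/
def dS {n : ℕ} (c₀ c : Config n) (i : ℕ) : ℤ := |c₀.st i - c.st i|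

/-- The set of positions occupied by a configuration. -/
def posSet {n : ℕ} (c : Config n) : Set Pt := {q | ∃ i < n, c.pos i = q}


/-- Adjacency on the triangular grid. -/
def Adj (p q : Pt) : Prop := q - p ∈ unitVecs

/-- The graph induced by the edge relation `E` on the set `S` is connected. -/
def ConnectedIn (E : Pt → Pt → Prop) (S : Set Pt) : Prop :=
  ∀ p ∈ S, ∀ q ∈ S, Relation.ReflTransGen (fun a b => a ∈ S ∧ b ∈ S ∧ E a b) p q

/-- A shape: a finite subset of the grid whose induced graph is connected. -/
def IsShape (S : Set Pt) : Prop := S.Finite ∧ ConnectedIn Adj S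

/-- `y`-monotone shape: the points of each row form a set of consecutive integers. -/
def YMonotone (S : Set Pt) : Prop :=
  ∀ j x₁ x₂ x₃ : ℤ, x₁ ≤ x₂ → x₂ ≤ x₃ → (x₁, j) ∈ S → (x₃, j) ∈ S → (x₂, j) ∈ S

/-- Adjacency along the `x` and `y` axes only. -/
def AdjXY (p q : Pt) : Prop :=
  q - p ∈ ({((1 : ℤ), (0 : ℤ)), (-1, 0), (0, 1), (0, -1)} : Set Pt)

/-- `xy`-connected: connected using only `±x` and `±y` edges. -/
def XYConnected (S : Set Pt) : Prop := ConnectedIn AdjXY S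

/-- The perimeter of a shape: its points having a neighbour outside the shape. -/
def perimeter (S : Set Pt) : Set Pt := {p ∈ S | ∃ v ∈ unitVecs, p + v ∉ S}

/-- Translation of a set of points. -/
def translate (t : Pt) (S : Set Pt) : Set Pt := (fun p => p + t) '' S

/-- The cardinality of the symmetric difference of two sets of points. -/
noncomputable def symmDiffCard (A B : Set Pt) : ℕ := ((A \ B) ∪ (B \ A)).ncard

/-- Error of a configuration w.r.t. a shape: the least cardinality, over all translations `t`,
of the symmetric difference of `S + t` and the set of monomer positions. -/
noncomputable def foldError {n : ℕ} (S : Set Pt) (c : Config n) : ℕ :=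
  sInf {m | ∃ t : Pt, symmDiffCard (translate t S) (posSet c) = m}

/-- The allowed steps of a `yw`-chain. -/
def ywSteps : Set Pt := {((0 : ℤ), (1 : ℤ)), (-1, 1)}

/-- `c 0, …, c (k-1)` is a `yw`-separator of the `y`-monotone shape `S`: a `yw`-chain inside `S`
from the bottommost row of `S` to the topmost row of `S`. -/
def IsYWSep (S : Set Pt) (k : ℕ) (c : ℕ → Pt) : Prop :=
  0 < k ∧ (∀ ℓ, ℓ + 1 < k → c (ℓ + 1) - c ℓ ∈ ywSteps) ∧ (∀ ℓ < k, c ℓ ∈ S) ∧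
    (∀ p ∈ S, (c 0).2 ≤ p.2) ∧ (∀ p ∈ S, p.2 ≤ (c (k - 1)).2)

/-- The shape `S` scaled by a factor `2`. -/
def scale2 (S : Set Pt) : Set Pt :=
  {q | ∃ p ∈ S, ∃ a b : ℤ, (a = 0 ∨ a = 1) ∧ (b = 0 ∨ b = 1) ∧ q = (2 * p.1 + a, 2 * p.2 + b)}

/-- The right boundary of a shape: the rightmost point of each nonempty row. -/
def rightBdry (S : Set Pt) : Set Pt := {p ∈ S | ∀ q ∈ S, q.2 = p.2 → q.1 ≤ p.1}

/-- The left boundary of a shape: the leftmost point of each nonempty row. -/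
def leftBdry (S : Set Pt) : Set Pt := {p ∈ S | ∀ q ∈ S, q.2 = p.2 → p.1 ≤ q.1}

/-- The "almost rectangle" `R_{k'}` from the definition of the `1`-gap spiral. -/
def spiralRing (k : ℤ) : Set Pt :=
  (({p : Pt | (p.2 = 2 * k ∨ p.2 = -(2 * k)) ∧ -(2 * k) ≤ p.1 ∧ p.1 ≤ 2 * k - 1} ∪
      {p : Pt | (p.1 = -(2 * k) ∨ p.1 = 2 * k - 1) ∧ -(2 * k) ≤ p.2 ∧ p.2 ≤ 2 * k}) ∪
      {(2 * k - 2, -(2 * k) + 2), (2 * k, -(2 * k)), (2 * k + 1, -(2 * k))}) \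
    {(2 * k - 1, -(2 * k) + 1)}

/-- The `k`-turn `1`-gap spiral `S_k`. -/
def spiral (k : ℕ) : Set Pt := ⋃ j ∈ Finset.Icc 1 k, spiralRing (j : ℤ)

/-- The base turning numbers `t_i` of the inside-to-outside sequence. -/
def tIn (t0 : ℤ) : ℕ → ℤ
  | 0 => t0
  | i + 1 => tIn t0 i + (if (i + 1) % 2 = 0 then 2 else 1)

/-- The inside-to-outside turning number sequence
`T_in(t₀) = [t₀]¹,[t₁]²,…,[t_{4k}]^{4k+1}, t_{4k}`. -/
def TInList (k : ℕ) (t0 : ℤ) : List ℤ :=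
  ((List.range (4 * k + 1)).flatMap fun i => List.replicate (i + 1) (tIn t0 i)) ++ [tIn t0 (4 * k)]

/-- The base turning numbers `t_i` of the outside-to-inside sequence. -/
def tOut (t0 : ℤ) : ℕ → ℤ
  | 0 => t0
  | i + 1 => tOut t0 i - (if (i + 1) % 2 = 0 then 1 else 2)

/-- The outside-to-inside turning number sequence
`T_out(t₀) = t₀,[t₀]^{4k+1},[t₁]^{4k},…,[t_{4k}]¹`. -/
def TOutList (k : ℕ) (t0 : ℤ) : List ℤ :=
  t0 :: ((List.range (4 * k + 1)).flatMap fun i => List.replicate (4 * k + 1 - i) (tOut t0 i))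

/-- The cross shape with arm length `a`. -/
def cross (a : ℤ) : Set Pt :=
  {p : Pt | p.2 = 0 ∧ -a ≤ p.1 ∧ p.1 ≤ a} ∪ {p : Pt | p.1 = 0 ∧ -a ≤ p.2 ∧ p.2 ≤ a}

/-- A positive zig-zag path: pairwise distinct points with steps in `{x, -x, y, w}`. -/
def PosZigZag (n : ℕ) (p : ℕ → Pt) : Prop :=
  (∀ i < n, ∀ j < n, p i = p j → i = j) ∧
    ∀ i, i + 1 < n → p (i + 1) - p i ∈ ({((1 : ℤ), (0 : ℤ)), (-1, 0), (0, 1), (-1, 1)} : Set Pt)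

/-- A negative zig-zag path: pairwise distinct points with steps in `{x, -x, -y, -w}`. -/
def NegZigZag (n : ℕ) (p : ℕ → Pt) : Prop :=
  (∀ i < n, ∀ j < n, p i = p j → i = j) ∧
    ∀ i, i + 1 < n → p (i + 1) - p i ∈ ({((1 : ℤ), (0 : ℤ)), (-1, 0), (0, -1), (1, -1)} : Set Pt)



lemma neg_mem_unitVecs {v : Pt} (h : v ∈ unitVecs) : -v ∈ unitVecs := by
  simp only [unitVecs, Set.mem_insert_iff, Set.mem_singleton_iff] at h ⊢
  rcases h with h|h|h|h|h|h <;> subst h <;> simp [Prod.ext_iff]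

lemma tip_right (a : ℤ) (ha : 2 ≤ a) {v : Pt} (hv : v ∈ unitVecs)
    (h : ((a, 0) : Pt) + v ∈ cross a) : v = (-1, 0) := by
  simp only [unitVecs, Set.mem_insert_iff, Set.mem_singleton_iff] at hv
  rcases hv with h'|h'|h'|h'|h'|h' <;> subst h' <;>
    simp only [cross, Prod.mk_add_mk, Set.mem_union, Set.mem_setOf_eq] at h <;>
    first | rfl | omega

lemma tip_left (a : ℤ) (ha : 2 ≤ a) {v : Pt} (hv : v ∈ unitVecs)
    (h : ((-a, 0) : Pt) + v ∈ cross a) : v = (1, 0) := by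
  simp only [unitVecs, Set.mem_insert_iff, Set.mem_singleton_iff] at hv
  rcases hv with h'|h'|h'|h'|h'|h' <;> subst h' <;>
    simp only [cross, Prod.mk_add_mk, Set.mem_union, Set.mem_setOf_eq] at h <;>
    first | rfl | omega

lemma tip_top (a : ℤ) (ha : 2 ≤ a) {v : Pt} (hv : v ∈ unitVecs)
    (h : ((0, a) : Pt) + v ∈ cross a) : v = (0, -1) := by
  simp only [unitVecs, Set.mem_insert_iff, Set.mem_singleton_iff] at hv
  rcases hv with h'|h'|h'|h'|h'|h' <;> subst h' <;>
    simp only [cross, Prod.mk_add_mk, Set.mem_union, Set.mem_setOf_eq] at h <;>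
    first | rfl | omega

lemma cross_finite (a : ℤ) : (cross a).Finite := by
  apply Set.Finite.subset (Set.finite_Icc ((-a, -a) : Pt) (a, a))
  rintro ⟨x, y⟩ h
  simp only [cross, Set.mem_union, Set.mem_setOf_eq] at h
  simp only [Set.mem_Icc, Prod.mk_le_mk, Prod.le_def]
  omega

lemma cross_connected (a : ℤ) (ha : 2 ≤ a) : ConnectedIn Adj (cross a) := by
  set S := cross a with hS
  set R : Pt → Pt → Prop := fun p q => p ∈ S ∧ q ∈ S ∧ Adj p q with hR
  have hsymm : Symmetric R := by
    rintro p q ⟨h1, h2, h3⟩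
    refine ⟨h2, h1, ?_⟩
    have := neg_mem_unitVecs h3
    rwa [neg_sub] at this
  have hmem : ∀ x y : ℤ, (y = 0 ∧ -a ≤ x ∧ x ≤ a) ∨ (x = 0 ∧ -a ≤ y ∧ y ≤ a) →
      ((x, y) : Pt) ∈ S := by
    intro x y h
    simp only [hS, cross, Set.mem_union, Set.mem_setOf_eq]
    exact h
  have hx : ∀ k : ℕ, (k : ℤ) ≤ a → Relation.ReflTransGen R (((k : ℤ), 0) : Pt) ((0, 0) : Pt) := by
    intro k
    induction k with
    | zero => intro _; simpa using Relation.ReflTransGen.refl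
    | succ m ih =>
      intro hk
      have h1 : R ((((m + 1 : ℕ) : ℤ), 0) : Pt) ((((m : ℕ) : ℤ), 0) : Pt) := by
        refine ⟨hmem _ _ ?_, hmem _ _ ?_, ?_⟩
        · omega
        · omega
        · simp only [unitVecs, Adj, Prod.mk_sub_mk, Set.mem_insert_iff, Set.mem_singleton_iff,
            Prod.mk.injEq]
          omega
      exact Relation.ReflTransGen.head h1 (ih (by omega))
  have hxn : ∀ k : ℕ, (k : ℤ) ≤ a →
      Relation.ReflTransGen R ((-(k : ℤ), 0) : Pt) ((0, 0) : Pt) := by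
    intro k
    induction k with
    | zero => intro _; simpa using Relation.ReflTransGen.refl
    | succ m ih =>
      intro hk
      have h1 : R ((-((m + 1 : ℕ) : ℤ), 0) : Pt) ((-((m : ℕ) : ℤ), 0) : Pt) := by
        refine ⟨hmem _ _ ?_, hmem _ _ ?_, ?_⟩
        · omega
        · omega
        · simp only [unitVecs, Adj, Prod.mk_sub_mk, Set.mem_insert_iff, Set.mem_singleton_iff,
            Prod.mk.injEq]
          omega
      exact Relation.ReflTransGen.head h1 (ih (by omega))
  have hy : ∀ k : ℕ, (k : ℤ) ≤ a → Relation.ReflTransGen R ((0, (k : ℤ)) : Pt) ((0, 0) : Pt) := by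
    intro k
    induction k with
    | zero => intro _; simpa using Relation.ReflTransGen.refl
    | succ m ih =>
      intro hk
      have h1 : R ((0, ((m + 1 : ℕ) : ℤ)) : Pt) ((0, ((m : ℕ) : ℤ)) : Pt) := by
        refine ⟨hmem _ _ ?_, hmem _ _ ?_, ?_⟩
        · omega
        · omega
        · simp only [unitVecs, Adj, Prod.mk_sub_mk, Set.mem_insert_iff, Set.mem_singleton_iff,
            Prod.mk.injEq]
          omega
      exact Relation.ReflTransGen.head h1 (ih (by omega))
  have hyn : ∀ k : ℕ, (k : ℤ) ≤ a →
      Relation.ReflTransGen R ((0, -(k : ℤ)) : Pt) ((0, 0) : Pt) := by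
    intro k
    induction k with
    | zero => intro _; simpa using Relation.ReflTransGen.refl
    | succ m ih =>
      intro hk
      have h1 : R ((0, -((m + 1 : ℕ) : ℤ)) : Pt) ((0, -((m : ℕ) : ℤ)) : Pt) := by
        refine ⟨hmem _ _ ?_, hmem _ _ ?_, ?_⟩
        · omega
        · omega
        · simp only [unitVecs, Adj, Prod.mk_sub_mk, Set.mem_insert_iff, Set.mem_singleton_iff,
            Prod.mk.injEq]
          omega
      exact Relation.ReflTransGen.head h1 (ih (by omega))
  have toZero : ∀ p ∈ S, Relation.ReflTransGen R p ((0, 0) : Pt) := by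
    rintro ⟨x, y⟩ hp
    simp only [hS, cross, Set.mem_union, Set.mem_setOf_eq] at hp
    rcases hp with ⟨h0, h1, h2⟩ | ⟨h0, h1, h2⟩
    · obtain ⟨k, rfl | rfl⟩ := Int.eq_nat_or_neg x
      · exact h0 ▸ hx k (by omega)
      · exact h0 ▸ hxn k (by omega)
    · obtain ⟨k, rfl | rfl⟩ := Int.eq_nat_or_neg y
      · exact h0 ▸ hy k (by omega)
      · exact h0 ▸ hyn k (by omega)
  intro p hp q hq
  exact (toZero p hp).trans (by haveI : Std.Symm R := ⟨fun _ _ h => hsymm h⟩; exact Std.Symm.symm _ _ (toZero q hq))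


/-- For every `a ≥ 2`, the cross shape is a `y`-monotone shape that is not
foldable with zero error: no Turning Machine computes a target configuration, with all states
`0`, whose set of positions is a translate of the cross. -/
theorem cross_not_foldable (a : ℤ) (ha : 2 ≤ a) :
    (IsShape (cross a) ∧ YMonotone (cross a)) ∧
    ¬ ∃ (n : ℕ) (s₀ : ℕ → ℤ) (ct : Config n) (t : Pt),
        Computes (mkInit n s₀) ct ∧ (∀ i < n, ct.st i = 0) ∧
        posSet ct = translate t (cross a) := by
  refine ⟨⟨⟨cross_finite a, cross_connected a ha⟩, ?_⟩, ?_⟩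
  · -- y-monotone
    intro j x1 x2 x3 h12 h23 h1 h3
    simp only [cross, Set.mem_union, Set.mem_setOf_eq] at h1 h3 ⊢
    omega
  · rintro ⟨n, s₀, ct, t, -, -, hpos⟩
    have hmem2 : ∀ i < n, ∃ r, r ∈ cross a ∧ ct.pos i = r + t := by
      intro i hi
      have h : ct.pos i ∈ posSet ct := ⟨i, hi, rfl⟩
      rw [hpos] at h
      obtain ⟨r, hr, hrt⟩ := h
      exact ⟨r, hr, hrt.symm⟩
    have hmemiff : ∀ q : Pt, q ∈ cross a → ∃ i < n, ct.pos i = q + t := by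
      intro q hq
      have h : q + t ∈ translate t (cross a) := ⟨q, hq, rfl⟩
      rw [← hpos] at h
      exact h
    have endpt : ∀ q : Pt,
        (∀ v ∈ unitVecs, ∀ w ∈ unitVecs, q + v ∈ cross a → q + w ∈ cross a → v = w) →
        ∀ i, i < n → ct.pos i = q + t → i = 0 ∨ i + 1 = n := by
      intro q huniq i hi hqi
      by_contra hcon
      push_neg at hcon
      obtain ⟨h0, hn1⟩ := hcon
      obtain ⟨j, rfl⟩ : ∃ j, i = j + 1 := ⟨i - 1, by omega⟩
      have hn : j + 2 < n := by omega
      have hd1 : ct.pos (j + 1) - ct.pos j ∈ unitVecs := ct.step_unit j (by omega)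
      have hd2 : ct.pos (j + 2) - ct.pos (j + 1) ∈ unitVecs := ct.step_unit (j + 1) (by omega)
      obtain ⟨r1, hr1, hre1⟩ := hmem2 j (by omega)
      obtain ⟨r2, hr2, hre2⟩ := hmem2 (j + 2) (by omega)
      have hv1u : ct.pos j - ct.pos (j + 1) ∈ unitVecs := by
        have := neg_mem_unitVecs hd1
        rwa [neg_sub] at this
      have he1 : ct.pos j = q + (ct.pos j - ct.pos (j + 1)) + t := by
        rw [hqi]; abel
      have he2 : ct.pos (j + 2) = q + (ct.pos (j + 2) - ct.pos (j + 1)) + t := by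
        rw [hqi]; abel
      have hm1 : q + (ct.pos j - ct.pos (j + 1)) ∈ cross a := by
        have h : r1 + t = q + (ct.pos j - ct.pos (j + 1)) + t := hre1.symm.trans he1
        have h' := add_right_cancel h
        rwa [← h']
      have hm2 : q + (ct.pos (j + 2) - ct.pos (j + 1)) ∈ cross a := by
        have h : r2 + t = q + (ct.pos (j + 2) - ct.pos (j + 1)) + t := hre2.symm.trans he2
        have h' := add_right_cancel h
        rwa [← h']
      have hvv := huniq _ hv1u _ hd2 hm1 hm2
      have heq : ct.pos j = ct.pos (j + 2) := by rw [he1, he2, hvv]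
      have := ct.pos_inj j (by omega) (j + 2) hn heq
      omega
    have m1 : ((a, 0) : Pt) ∈ cross a :=
      Or.inl ⟨rfl, by show -a ≤ a; omega, le_refl a⟩
    have m2 : ((-a, 0) : Pt) ∈ cross a :=
      Or.inl ⟨rfl, le_refl (-a), by show -a ≤ a; omega⟩
    have m3 : ((0, a) : Pt) ∈ cross a :=
      Or.inr ⟨rfl, by show -a ≤ a; omega, le_refl a⟩
    obtain ⟨i1, hi1, hp1⟩ := hmemiff _ m1
    obtain ⟨i2, hi2, hp2⟩ := hmemiff _ m2
    obtain ⟨i3, hi3, hp3⟩ := hmemiff _ m3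
    have u1 : ∀ v ∈ unitVecs, ∀ w ∈ unitVecs,
        ((a, 0) : Pt) + v ∈ cross a → ((a, 0) : Pt) + w ∈ cross a → v = w := by
      intro v hv w hw hv' hw'
      rw [tip_right a ha hv hv', tip_right a ha hw hw']
    have u2 : ∀ v ∈ unitVecs, ∀ w ∈ unitVecs,
        ((-a, 0) : Pt) + v ∈ cross a → ((-a, 0) : Pt) + w ∈ cross a → v = w := by
      intro v hv w hw hv' hw'
      rw [tip_left a ha hv hv', tip_left a ha hw hw']
    have u3 : ∀ v ∈ unitVecs, ∀ w ∈ unitVecs,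
        ((0, a) : Pt) + v ∈ cross a → ((0, a) : Pt) + w ∈ cross a → v = w := by
      intro v hv w hw hv' hw'
      rw [tip_top a ha hv hv', tip_top a ha hw hw']
    have e1 := endpt _ u1 i1 hi1 hp1
    have e2 := endpt _ u2 i2 hi2 hp2
    have e3 := endpt _ u3 i3 hi3 hp3
    have ne12 : i1 ≠ i2 := by
      intro h
      have h1 : ((a, 0) : Pt) + t = ((-a, 0) : Pt) + t := by rw [← hp1, h, hp2]
      have h2 := add_right_cancel h1
      simp only [Prod.mk.injEq] at h2
      omega
    have ne13 : i1 ≠ i3 := by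
      intro h
      have h1 : ((a, 0) : Pt) + t = ((0, a) : Pt) + t := by rw [← hp1, h, hp3]
      have h2 := add_right_cancel h1
      simp only [Prod.mk.injEq] at h2
      omega
    have ne23 : i2 ≠ i3 := by
      intro h
      have h1 : ((-a, 0) : Pt) + t = ((0, a) : Pt) + t := by rw [← hp2, h, hp3]
      have h2 := add_right_cancel h1
      simp only [Prod.mk.injEq] at h2
      omega
    omega


end TuringMachineFolding
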